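/- arXiv:1510.02394 — 2 statements merged into one kernel-verified Lean document; each statement's English description precedes it below -/
import Mathlib

section
/- Let G be a simple connected graph with N₀ vertices, E₀ edges, and circuit rank r = E₀ − N₀ + 1. For n ≥ 2, the multiplicity of the eigenvalue 0 of the normalized adjacency matrix Pₙ of sⁿ(G) equals r + 1. For n = 1, the multiplicity of 0 as an eigenvalue of P₁ equals r − 1 if G contains an odd cycle, and r + 1 if G is bipartite. -/
/-- The subdivision graph `s(G)`: one new vertex inserted on each edge of `G`. -/
def subdivision {V : Type} (G : SimpleGraph V) : SimpleGraph (V ⊕ G.edgeSet) where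
  Adj x y :=
    match x, y with
    | Sum.inl v, Sum.inr e => v ∈ (e : Sym2 V)
    | Sum.inr e, Sum.inl v => v ∈ (e : Sym2 V)
    | _, _ => False
  symm := ⟨by rintro (v | e) (w | f) h <;> exact h⟩
  loopless := ⟨by rintro (v | e) h <;> exact h⟩

/-- The iterated subdivision `sⁿ(G)`, as a pair (vertex type, graph). -/
def iterSubdiv {V : Type} (G : SimpleGraph V) : ℕ → (W : Type) × SimpleGraph W
  | 0 => ⟨V, G⟩
  | n + 1 => ⟨_, subdivision (iterSubdiv G n).2⟩

instance iterSubdivFinite {V : Type} [Finite V] (G : SimpleGraph V) :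
    ∀ n, Finite (iterSubdiv G n).1
  | 0 => ‹Finite V›
  | n + 1 => by
    haveI := iterSubdivFinite G n
    exact inferInstanceAs (Finite ((iterSubdiv G n).1 ⊕ (iterSubdiv G n).2.edgeSet))

open Classical in
noncomputable def normAdj {V : Type} (G : SimpleGraph V) : Matrix V V ℝ :=
  Matrix.of fun i j =>
    if G.Adj i j then
      1 / Real.sqrt ((Nat.card (G.neighborSet i) : ℝ) * (Nat.card (G.neighborSet j) : ℝ))
    else 0

open Classical in
noncomputable def normLap {V : Type} (G : SimpleGraph V) : Matrix V V ℝ :=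
  1 - normAdj G

theorem normAdj_isHermitian {V : Type} (G : SimpleGraph V) : (normAdj G).IsHermitian := by
  unfold Matrix.IsHermitian
  ext i j
  simp only [Matrix.conjTranspose_apply, normAdj, Matrix.of_apply, star_trivial]
  rw [G.adj_comm]
  rcases em (G.Adj i j) with h | h <;> simp [h, mul_comm]

open Classical in
theorem normLap_isHermitian {V : Type} (G : SimpleGraph V) : (normLap G).IsHermitian :=
  Matrix.isHermitian_one.sub (normAdj_isHermitian G)

/-- `μ` is an eigenvalue of the matrix `M`. -/
def IsEigenvalueM {V : Type} [Finite V] (M : Matrix V V ℝ) (μ : ℝ) : Prop :=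
  haveI := Fintype.ofFinite V
  haveI := Classical.decEq V
  Module.End.HasEigenvalue (Matrix.toLin' M) μ

/-- The multiplicity of `μ` as an eigenvalue of `M` (dimension of the eigenspace). -/
noncomputable def eigMult {V : Type} [Finite V] (M : Matrix V V ℝ) (μ : ℝ) : ℕ :=
  haveI := Fintype.ofFinite V
  haveI := Classical.decEq V
  Module.finrank ℝ ↥(Module.End.eigenspace (Matrix.toLin' M) μ)

open Classical in
noncomputable def kemeny {V : Type} [Finite V] (G : SimpleGraph V) : ℝ :=
  haveI := Fintype.ofFinite V
  haveI := Classical.decEq V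
  ∑ i : V, (if (normLap_isHermitian G).eigenvalues i = 0 then 0
            else ((normLap_isHermitian G).eigenvalues i)⁻¹)

/-- The multiplicative degree-Kirchhoff index `Kf* = 2|E| · Σ_{k≥2} 1/λ_k`. -/
noncomputable def kirchhoffStar {V : Type} [Finite V] (G : SimpleGraph V) : ℝ :=
  2 * (Nat.card G.edgeSet : ℝ) * kemeny G

/-- The number of spanning trees of `G`. -/
noncomputable def numSpanningTrees {V : Type} (G : SimpleGraph V) : ℕ :=
  Nat.card {H : G.Subgraph // H.IsSpanning ∧ H.coe.IsTree}

/-! ### Auxiliary development -/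

section Aux

open Classical Module Finset Matrix

variable {W : Type}

/-- Vectors alternating in sign along edges. -/
def sgnSpace (H : SimpleGraph W) : Submodule ℝ (W → ℝ) where
  carrier := {y | ∀ u w, H.Adj u w → y u + y w = 0}
  add_mem' := by
    intro a b ha hb u w h
    have h1 := ha u w h; have h2 := hb u w h
    simp only [Pi.add_apply]; linarith
  zero_mem' := by intro u w h; simp
  smul_mem' := by
    intro c y hy u w h
    have h1 := hy u w h
    simp only [Pi.smul_apply, smul_eq_mul, ← mul_add, h1, mul_zero]

@[simp] lemma mem_sgnSpace_iff {H : SimpleGraph W} {y : W → ℝ} :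
    y ∈ sgnSpace H ↔ ∀ u w, H.Adj u w → y u + y w = 0 := Iff.rfl

/-- Vectors on edges summing to zero around each vertex. -/
noncomputable def flowSpace (H : SimpleGraph W) [Fintype H.edgeSet] :
    Submodule ℝ (H.edgeSet → ℝ) where
  carrier := {z | ∀ v : W, ∑ e : H.edgeSet, (if v ∈ (e : Sym2 W) then z e else 0) = 0}
  add_mem' := by
    intro a b ha hb v
    have key : ∀ e : H.edgeSet, (if v ∈ (e : Sym2 W) then (a + b) e else 0)
        = (if v ∈ (e : Sym2 W) then a e else 0) + (if v ∈ (e : Sym2 W) then b e else 0) := by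
      intro e; split <;> simp
    rw [Finset.sum_congr rfl (fun e _ => key e), Finset.sum_add_distrib, ha v, hb v, add_zero]
  zero_mem' := by intro v; simp
  smul_mem' := by
    intro c z hz v
    have key : ∀ e : H.edgeSet, (if v ∈ (e : Sym2 W) then (c • z) e else 0)
        = c * (if v ∈ (e : Sym2 W) then z e else 0) := by
      intro e; split <;> simp
    rw [Finset.sum_congr rfl (fun e _ => key e), ← Finset.mul_sum, hz v, mul_zero]

@[simp] lemma mem_flowSpace_iff {H : SimpleGraph W} [Fintype H.edgeSet] {z : H.edgeSet → ℝ} :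
    z ∈ flowSpace H ↔ ∀ v : W, ∑ e : H.edgeSet, (if v ∈ (e : Sym2 W) then z e else 0) = 0 :=
  Iff.rfl

open Classical in
/-- Unoriented incidence matrix. -/
noncomputable def incMat (H : SimpleGraph W) : Matrix W H.edgeSet ℝ :=
  Matrix.of fun v e => if v ∈ (e : Sym2 W) then 1 else 0

lemma sum_ite_pair [Fintype W] {a b : W} (hab : a ≠ b) (y : W → ℝ) :
    ∑ w : W, (if w = a ∨ w = b then y w else 0) = y a + y b := by
  classical
  have h1 : ∀ w : W, (if w = a ∨ w = b then y w else 0) = if w ∈ ({a, b} : Finset W) then y w else 0 := by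
    intro w; simp
  rw [Finset.sum_congr rfl (fun w _ => h1 w), Finset.sum_ite_mem,
    Finset.univ_inter, Finset.sum_pair hab]

lemma flowSpace_eq_ker (H : SimpleGraph W) [Fintype W] [Fintype H.edgeSet] :
    flowSpace H = LinearMap.ker (incMat H).mulVecLin := by
  ext z
  simp only [mem_flowSpace_iff, LinearMap.mem_ker, Matrix.mulVecLin_apply, funext_iff,
    Matrix.mulVec, dotProduct, Pi.zero_apply, incMat, Matrix.of_apply, ite_mul, one_mul, zero_mul]

lemma sgnSpace_eq_ker (H : SimpleGraph W) [Fintype W] [Fintype H.edgeSet] :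
    sgnSpace H = LinearMap.ker (incMat H)ᵀ.mulVecLin := by
  ext y
  simp only [mem_sgnSpace_iff, LinearMap.mem_ker, Matrix.mulVecLin_apply, funext_iff,
    Matrix.mulVec, dotProduct, Pi.zero_apply, Matrix.transpose_apply, incMat, Matrix.of_apply,
    ite_mul, one_mul, zero_mul]
  constructor
  · rintro h ⟨e, he⟩
    induction e using Sym2.ind with
    | _ a b =>
      have hab : a ≠ b := (H.mem_edgeSet.1 he).ne
      simpa [sum_ite_pair hab y] using h a b (H.mem_edgeSet.1 he)
  · intro h u w huw
    have := h ⟨s(u, w), H.mem_edgeSet.2 huw⟩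
    simpa [sum_ite_pair huw.ne y] using this

lemma finrank_flow_add_card (H : SimpleGraph W) [Fintype W] [Fintype H.edgeSet] :
    finrank ℝ (flowSpace H) + Fintype.card W
      = finrank ℝ (sgnSpace H) + Fintype.card H.edgeSet := by
  have h1 := LinearMap.finrank_range_add_finrank_ker (incMat H).mulVecLin
  have h2 := LinearMap.finrank_range_add_finrank_ker (incMat H)ᵀ.mulVecLin
  have h3 : (incMat H)ᵀ.rank = (incMat H).rank := Matrix.rank_transpose _
  rw [Matrix.rank, Matrix.rank] at h3
  rw [finrank_pi ℝ] at h1 h2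
  rw [flowSpace_eq_ker, sgnSpace_eq_ker]
  omega

lemma sgn_walk {H : SimpleGraph W} {y : W → ℝ} (hy : y ∈ sgnSpace H) :
    ∀ {u v : W} (p : H.Walk u v), y v = (-1 : ℝ) ^ p.length * y u := by
  intro u v p
  induction p with
  | nil => simp
  | @cons a b c h q ih =>
    have hab : y a + y b = 0 := hy a b h
    have hb : y b = -y a := by linarith
    rw [SimpleGraph.Walk.length_cons, pow_succ, ih, hb]
    ring

lemma sgnSpace_eq_bot {H : SimpleGraph W} (hH : H.Connected)
    (hodd : ∃ (v : W) (w : H.Walk v v), w.IsCycle ∧ Odd w.length) :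
    sgnSpace H = ⊥ := by
  obtain ⟨v, cyc, _, hlen⟩ := hodd
  rw [eq_bot_iff]
  intro y hy
  have hv : y v = 0 := by
    have := sgn_walk hy cyc
    rw [hlen.neg_one_pow] at this
    linarith
  simp only [Submodule.mem_bot]
  funext u
  obtain ⟨p⟩ := hH.preconnected v u
  rw [Pi.zero_apply, sgn_walk hy p, hv, mul_zero]

lemma sgnSpace_dim_one {H : SimpleGraph W} (hH : H.Connected) (hc : H.Colorable 2) :
    finrank ℝ (sgnSpace H) = 1 := by
  haveI : Nonempty W := hH.nonempty
  obtain ⟨u₀⟩ := ‹Nonempty W›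
  obtain ⟨C⟩ := hc
  set y₀ : W → ℝ := fun w => if C w = 0 then 1 else -1 with hy₀def
  have pairval : ∀ a b : Fin 2, a ≠ b →
      (if a = 0 then (1:ℝ) else -1) + (if b = 0 then 1 else -1) = 0 := by
    intro a b hab
    fin_cases a <;> fin_cases b <;> simp_all <;> norm_num
  have hy₀ : y₀ ∈ sgnSpace H := by
    intro u w h
    exact pairval _ _ (C.valid h)
  have hsq : ∀ w : W, y₀ w * y₀ w = 1 := by
    intro w; simp only [hy₀def]; split <;> norm_num
  have hne₀ : y₀ ≠ 0 := by
    intro h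
    have := hsq u₀
    rw [h] at this
    simp at this
  have hspan : sgnSpace H = Submodule.span ℝ {y₀} := by
    apply le_antisymm
    · intro y hy
      rw [Submodule.mem_span_singleton]
      refine ⟨y u₀ * y₀ u₀, ?_⟩
      funext w
      obtain ⟨p⟩ := hH.preconnected u₀ w
      have h1 : y w = (-1:ℝ) ^ p.length * y u₀ := sgn_walk hy p
      have h2 : y₀ w = (-1:ℝ) ^ p.length * y₀ u₀ := sgn_walk hy₀ p
      have := hsq u₀
      rw [Pi.smul_apply, smul_eq_mul, h1, h2]
      linear_combination ((-1:ℝ) ^ p.length * y u₀) * (hsq u₀)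
    · rw [Submodule.span_le, Set.singleton_subset_iff]
      exact hy₀
  rw [hspan, finrank_span_singleton hne₀]


section Subdiv

variable {H : SimpleGraph W}

@[simp] lemma subdiv_adj_inl_inr {v : W} {e : H.edgeSet} :
    (subdivision H).Adj (Sum.inl v) (Sum.inr e) ↔ v ∈ (e : Sym2 W) := Iff.rfl

@[simp] lemma subdiv_adj_inr_inl {v : W} {e : H.edgeSet} :
    (subdivision H).Adj (Sum.inr e) (Sum.inl v) ↔ v ∈ (e : Sym2 W) := Iff.rfl

@[simp] lemma subdiv_adj_inl_inl {v w : W} :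
    ¬ (subdivision H).Adj (Sum.inl v) (Sum.inl w) := fun h => h

@[simp] lemma subdiv_adj_inr_inr {e f : H.edgeSet} :
    ¬ (subdivision H).Adj (Sum.inr e) (Sum.inr f) := fun h => h

lemma card_mem_edge {e : H.edgeSet} : Nat.card {w : W // w ∈ (e : Sym2 W)} = 2 := by
  obtain ⟨p, hp⟩ := e
  induction p using Sym2.ind with
  | _ a b =>
    have hab : a ≠ b := (H.mem_edgeSet.1 hp).ne
    have : Nat.card {w : W // w ∈ (s(a, b) : Sym2 W)} = Nat.card ({a, b} : Set W) := by
      apply Nat.card_congr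
      apply Equiv.subtypeEquivRight
      intro w
      simp [Sym2.mem_iff]
    rw [this, Nat.card_coe_set_eq, Set.ncard_pair hab]

noncomputable def neighborSet_inl_equiv (v : W) :
    {e : H.edgeSet // v ∈ (e : Sym2 W)} ≃ ((subdivision H).neighborSet (Sum.inl v)) := by
  refine Equiv.ofBijective (fun e => ⟨Sum.inr e.1, e.2⟩) ⟨?_, ?_⟩
  · rintro ⟨e, he⟩ ⟨f, hf⟩ h
    simpa using congrArg Subtype.val h
  · rintro ⟨(w | e), h⟩
    · exact False.elim h
    · exact ⟨⟨e, h⟩, rfl⟩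

noncomputable def neighborSet_inr_equiv (e : H.edgeSet) :
    {w : W // w ∈ (e : Sym2 W)} ≃ ((subdivision H).neighborSet (Sum.inr e)) := by
  refine Equiv.ofBijective (fun w => ⟨Sum.inl w.1, w.2⟩) ⟨?_, ?_⟩
  · rintro ⟨w, hw⟩ ⟨x, hx⟩ h
    simpa using congrArg Subtype.val h
  · rintro ⟨(w | f), h⟩
    · exact ⟨⟨w, h⟩, rfl⟩
    · exact False.elim h

lemma card_neighborSet_inr (e : H.edgeSet) :
    Nat.card ((subdivision H).neighborSet (Sum.inr e)) = 2 := by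
  rw [← Nat.card_congr (neighborSet_inr_equiv e), card_mem_edge]

lemma card_neighborSet_inl (v : W) :
    Nat.card ((subdivision H).neighborSet (Sum.inl v))
      = Nat.card {e : H.edgeSet // v ∈ (e : Sym2 W)} :=
  (Nat.card_congr (neighborSet_inl_equiv v)).symm

/-- Edges of the subdivision are pairs (edge, endpoint). -/
noncomputable def subdiv_edge_equiv (H : SimpleGraph W) :
    (Σ e : H.edgeSet, {w : W // w ∈ (e : Sym2 W)}) ≃ (subdivision H).edgeSet := by
  refine Equiv.ofBijective
    (fun p => ⟨s(Sum.inl p.2.1, Sum.inr p.1), (subdivision H).mem_edgeSet.2 p.2.2⟩) ⟨?_, ?_⟩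
  · rintro ⟨⟨e, he⟩, ⟨v, hv⟩⟩ ⟨⟨f, hf⟩, ⟨w, hw⟩⟩ h
    simp only [Subtype.mk_eq_mk, Sym2.eq_iff] at h
    rcases h with ⟨h1, h2⟩ | ⟨h1, h2⟩
    · simp only [Sum.inl.injEq, Sum.inr.injEq, Subtype.mk_eq_mk] at h1 h2
      subst h1; subst h2; rfl
    · exact absurd h1 (by simp)
  · rintro ⟨p, hp⟩
    induction p using Sym2.ind with
    | _ x y =>
      have hadj : (subdivision H).Adj x y := (subdivision H).mem_edgeSet.1 hp
      match x, y, hadj with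
      | Sum.inl v, Sum.inr e, hadj => exact ⟨⟨e, ⟨v, hadj⟩⟩, rfl⟩
      | Sum.inr e, Sum.inl v, hadj => exact ⟨⟨e, ⟨v, hadj⟩⟩, by simp [Sym2.eq_swap]⟩

lemma card_subdiv_edgeSet [Finite W] (H : SimpleGraph W) :
    Nat.card (subdivision H).edgeSet = 2 * Nat.card H.edgeSet := by
  classical
  letI := Fintype.ofFinite W
  letI : Fintype H.edgeSet := Fintype.ofFinite _
  rw [← Nat.card_congr (subdiv_edge_equiv H)]
  haveI : ∀ e : H.edgeSet, Fintype {w : W // w ∈ (e : Sym2 W)} := fun e => Fintype.ofFinite _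
  rw [Nat.card_eq_fintype_card, Fintype.card_sigma]
  have key : ∀ e : H.edgeSet, Fintype.card {w : W // w ∈ (e : Sym2 W)} = 2 := by
    intro e; rw [← Nat.card_eq_fintype_card, card_mem_edge]
  rw [Finset.sum_congr rfl (fun e _ => key e), Finset.sum_const, smul_eq_mul, mul_comm,
    Nat.card_eq_fintype_card, Fintype.card]

lemma subdiv_connected (hH : H.Connected) : (subdivision H).Connected := by
  have hreach : ∀ {u v : W}, H.Walk u v →
      (subdivision H).Reachable (Sum.inl u) (Sum.inl v) := by
    intro u v p
    induction p with
    | nil => exact SimpleGraph.Reachable.refl _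
    | @cons a b c h q ih =>
      have h1 : (subdivision H).Adj (Sum.inl a) (Sum.inr ⟨s(a, b), H.mem_edgeSet.2 h⟩) :=
        Sym2.mem_mk_left a b
      have h2 : (subdivision H).Adj (Sum.inr ⟨s(a, b), H.mem_edgeSet.2 h⟩) (Sum.inl b) :=
        Sym2.mem_mk_right a b
      exact (h1.reachable.trans h2.reachable).trans ih
  haveI : Nonempty W := hH.nonempty
  obtain ⟨w₀⟩ := ‹Nonempty W›
  have key : ∀ x : W ⊕ H.edgeSet, (subdivision H).Reachable x (Sum.inl w₀) := by
    rintro (v | e)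
    · exact hreach ((hH.preconnected v w₀).some)
    · obtain ⟨p, hp⟩ := e
      induction p using Sym2.ind with
      | _ a b =>
        have h1 : (subdivision H).Adj (Sum.inr (⟨s(a, b), hp⟩ : H.edgeSet)) (Sum.inl a) :=
          Sym2.mem_mk_left a b
        exact h1.reachable.trans (hreach ((hH.preconnected a w₀).some))
  constructor
  intro x y
  exact (key x).trans (key y).symm

lemma subdiv_colorable (H : SimpleGraph W) : (subdivision H).Colorable 2 :=
  ⟨SimpleGraph.Coloring.mk (Sum.elim (fun _ => 0) (fun _ => 1)) (by
    rintro (v | e) (w | f) h <;> simp_all)⟩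

end Subdiv


lemma sgn_iff_edges [Fintype W] (H : SimpleGraph W) (y : W → ℝ) :
    (∀ e : H.edgeSet, ∑ w : W, (if w ∈ (e : Sym2 W) then y w else 0) = 0) ↔ y ∈ sgnSpace H := by
  constructor
  · intro h u w huw
    have := h ⟨s(u, w), H.mem_edgeSet.2 huw⟩
    simp only [Sym2.mem_iff] at this
    rwa [sum_ite_pair huw.ne y] at this
  · rintro h ⟨e, he⟩
    induction e using Sym2.ind with
    | _ a b =>
      have hab := H.mem_edgeSet.1 he
      simp only [Sym2.mem_iff]
      rw [sum_ite_pair hab.ne y]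
      exact h a b hab

/-- A product of submodules is equivalent to the product of the corresponding subtypes. -/
def subProdEquiv {A B : Type*} [AddCommGroup A] [Module ℝ A] [AddCommGroup B] [Module ℝ B]
    (p : Submodule ℝ A) (q : Submodule ℝ B) : (p.prod q) ≃ₗ[ℝ] (↥p × ↥q) where
  toFun x := (⟨x.1.1, x.2.1⟩, ⟨x.1.2, x.2.2⟩)
  invFun y := ⟨(y.1.1, y.2.1), y.1.2, y.2.2⟩
  map_add' := by intros; rfl
  map_smul' := by intros; rfl
  left_inv := by intro x; rfl
  right_inv := by intro y; rfl

lemma eigMult_zero_eq {V : Type} [Finite V] (M : Matrix V V ℝ) (n : ℕ)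
    (h : ∀ i1 : Fintype V, finrank ℝ (LinearMap.ker (@Matrix.mulVecLin ℝ _ V V i1 M)) = n) :
    eigMult M 0 = n := by
  letI := Fintype.ofFinite V
  letI := Classical.decEq V
  unfold eigMult
  rw [Module.End.eigenspace_zero, Matrix.toLin'_apply']
  exact h _

lemma master {W : Type} [Finite W] (H : SimpleGraph W) :
    (eigMult (normAdj (subdivision H)) 0 : ℤ)
      = (Nat.card H.edgeSet : ℤ) - (Nat.card W : ℤ) + 2 * (finrank ℝ (sgnSpace H) : ℤ) := by
  classical
  letI : Fintype W := Fintype.ofFinite W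
  letI : Fintype H.edgeSet := Fintype.ofFinite _
  set d : W → ℕ := fun w => Nat.card ((subdivision H).neighborSet (Sum.inl w)) with hd
  have hdpos : ∀ (w : W) (e : H.edgeSet), w ∈ (e : Sym2 W) → d w ≠ 0 := by
    intro w e he
    haveI : Nonempty ((subdivision H).neighborSet (Sum.inl w)) := ⟨⟨Sum.inr e, he⟩⟩
    exact Nat.card_pos.ne'
  set c : W → ℝ := fun w => if d w = 0 then 1 else (Real.sqrt (d w))⁻¹ with hc
  have hcne : ∀ w, c w ≠ 0 := by
    intro w
    simp only [hc]
    split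
    · norm_num
    · next h =>
      exact inv_ne_zero (Real.sqrt_ne_zero'.2 (by exact_mod_cast Nat.pos_of_ne_zero h))
  let Φ : ((W ⊕ H.edgeSet) → ℝ) ≃ₗ[ℝ] (W → ℝ) × (H.edgeSet → ℝ) :=
    { toFun := fun x => (fun w => c w * x (Sum.inl w), fun e => x (Sum.inr e))
      invFun := fun p => Sum.elim (fun w => (c w)⁻¹ * p.1 w) p.2
      map_add' := by
        intro x y
        refine Prod.ext ?_ ?_ <;> funext t <;> simp [mul_add]
      map_smul' := by
        intro r x
        refine Prod.ext ?_ ?_ <;> funext t <;> simp <;> ring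
      left_inv := by
        intro x
        funext t
        rcases t with w | e
        · simp [inv_mul_cancel_left₀ (hcne w)]
        · rfl
      right_inv := by
        intro p
        refine Prod.ext ?_ ?_
        · funext t; simp [mul_inv_cancel_left₀ (hcne t)]
        · rfl
    }
  have hmain : eigMult (normAdj (subdivision H)) 0
      = finrank ℝ (sgnSpace H) + finrank ℝ (flowSpace H) := by
    letI iS : Fintype (W ⊕ H.edgeSet) := inferInstance
    apply eigMult_zero_eq
    intro i1
    rw [Subsingleton.elim i1 iS]
    clear i1
    have hker : LinearMap.ker (normAdj (subdivision H)).mulVecLin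
        = Submodule.comap (Φ : ((W ⊕ H.edgeSet) → ℝ) →ₗ[ℝ] _)
            ((sgnSpace H).prod (flowSpace H)) := by
      ext x
      have rowA : ∀ v : W,
          ((∑ j : W ⊕ H.edgeSet, normAdj (subdivision H) (Sum.inl v) j * x j) = 0)
            ↔ (∑ e : H.edgeSet, (if v ∈ (e : Sym2 W) then x (Sum.inr e) else 0)) = 0 := by
        intro v
        rw [Fintype.sum_sum_type]
        have hz1 : ∀ w : W,
            normAdj (subdivision H) (Sum.inl v) (Sum.inl w) * x (Sum.inl w) = 0 := by
          intro w; simp [normAdj]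
        have hz2 : ∀ e : H.edgeSet,
            normAdj (subdivision H) (Sum.inl v) (Sum.inr e) * x (Sum.inr e)
              = (Real.sqrt ((d v : ℝ) * 2))⁻¹ * (if v ∈ (e : Sym2 W) then x (Sum.inr e) else 0) := by
          intro e
          by_cases hve : v ∈ (e : Sym2 W)
          · rw [if_pos hve]
            show (if (subdivision H).Adj (Sum.inl v) (Sum.inr e) then
              1 / Real.sqrt ((Nat.card ((subdivision H).neighborSet (Sum.inl v)) : ℝ) *
                (Nat.card ((subdivision H).neighborSet (Sum.inr e)) : ℝ)) else 0) * x (Sum.inr e) = _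
            rw [if_pos (by exact hve), card_neighborSet_inr]
            simp only [hd]
            norm_num [one_div]
          · rw [if_neg hve, mul_zero]
            show (if (subdivision H).Adj (Sum.inl v) (Sum.inr e) then
              1 / Real.sqrt ((Nat.card ((subdivision H).neighborSet (Sum.inl v)) : ℝ) *
                (Nat.card ((subdivision H).neighborSet (Sum.inr e)) : ℝ)) else 0) * x (Sum.inr e) = 0
            rw [if_neg (by exact hve), zero_mul]
        rw [Finset.sum_congr rfl (fun w _ => hz1 w), Finset.sum_const, smul_zero, zero_add,
          Finset.sum_congr rfl (fun e _ => hz2 e), ← Finset.mul_sum]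
        rcases Nat.eq_zero_or_pos (d v) with hdv | hdv
        · have hzero : ∀ e : H.edgeSet, (if v ∈ (e : Sym2 W) then x (Sum.inr e) else 0) = 0 := by
            intro e
            rw [if_neg]
            intro hve
            exact hdpos v e hve hdv
          rw [Finset.sum_congr rfl (fun e _ => hzero e), Finset.sum_const, smul_zero, mul_zero]
        · have hkne : (Real.sqrt ((d v : ℝ) * 2))⁻¹ ≠ 0 := by
            apply inv_ne_zero
            refine (Real.sqrt_ne_zero'.2 ?_)
            positivity
          constructor
          · intro h
            rcases mul_eq_zero.1 h with h | h
            · exact absurd h hkne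
            · exact h
          · intro h; rw [h, mul_zero]
      have rowB : ∀ e : H.edgeSet,
          ((∑ j : W ⊕ H.edgeSet, normAdj (subdivision H) (Sum.inr e) j * x j) = 0)
            ↔ (∑ w : W, (if w ∈ (e : Sym2 W) then c w * x (Sum.inl w) else 0)) = 0 := by
        intro e
        rw [Fintype.sum_sum_type]
        have hz1 : ∀ f : H.edgeSet,
            normAdj (subdivision H) (Sum.inr e) (Sum.inr f) * x (Sum.inr f) = 0 := by
          intro f; simp [normAdj]
        have hz2 : ∀ w : W,
            normAdj (subdivision H) (Sum.inr e) (Sum.inl w) * x (Sum.inl w)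
              = (Real.sqrt 2)⁻¹ * (if w ∈ (e : Sym2 W) then c w * x (Sum.inl w) else 0) := by
          intro w
          by_cases hwe : w ∈ (e : Sym2 W)
          · rw [if_pos hwe]
            show (if (subdivision H).Adj (Sum.inr e) (Sum.inl w) then
              1 / Real.sqrt ((Nat.card ((subdivision H).neighborSet (Sum.inr e)) : ℝ) *
                (Nat.card ((subdivision H).neighborSet (Sum.inl w)) : ℝ)) else 0) * x (Sum.inl w) = _
            rw [if_pos (by exact hwe), card_neighborSet_inr]
            have hdw : d w ≠ 0 := hdpos w e hwe
            have hcw : c w = (Real.sqrt (d w))⁻¹ := by simp only [hc]; rw [if_neg hdw]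
            rw [hcw, one_div, Real.sqrt_mul (by norm_num : (0:ℝ) ≤ ((2:ℕ):ℝ)), mul_inv]
            simp only [hd]
            push_cast
            ring
          · rw [if_neg hwe, mul_zero]
            show (if (subdivision H).Adj (Sum.inr e) (Sum.inl w) then
              1 / Real.sqrt ((Nat.card ((subdivision H).neighborSet (Sum.inr e)) : ℝ) *
                (Nat.card ((subdivision H).neighborSet (Sum.inl w)) : ℝ)) else 0) * x (Sum.inl w) = 0
            rw [if_neg (by exact hwe), zero_mul]
        rw [Finset.sum_congr rfl (fun f _ => hz1 f), Finset.sum_const, smul_zero, add_zero,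
          Finset.sum_congr rfl (fun w _ => hz2 w), ← Finset.mul_sum]
        have hkne : (Real.sqrt (2:ℝ))⁻¹ ≠ 0 := by
          apply inv_ne_zero
          refine (Real.sqrt_ne_zero'.2 ?_)
          norm_num
        constructor
        · intro h
          rcases mul_eq_zero.1 h with h | h
          · exact absurd h hkne
          · exact h
        · intro h; rw [h, mul_zero]
      have hmem : ((Φ : ((W ⊕ H.edgeSet) → ℝ) →ₗ[ℝ] _) x ∈ (sgnSpace H).prod (flowSpace H)) ↔
          ((∀ e : H.edgeSet, (∑ w : W, (if w ∈ (e : Sym2 W) then c w * x (Sum.inl w) else 0)) = 0)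
            ∧ (∀ v : W, (∑ e : H.edgeSet, (if v ∈ (e : Sym2 W) then x (Sum.inr e) else 0)) = 0)) := by
        rw [Submodule.mem_prod]
        apply and_congr
        · rw [← sgn_iff_edges H]
          constructor <;> intro h e <;> simpa [Φ] using h e
        · constructor <;> intro h v <;> simpa [Φ] using h v
      simp only [LinearMap.mem_ker, Matrix.mulVecLin_apply, funext_iff, Matrix.mulVec,
        dotProduct, Pi.zero_apply, Sum.forall, Submodule.mem_comap]
      rw [hmem]
      exact (and_congr (forall_congr' rowA) (forall_congr' rowB)).trans and_comm
    rw [hker, Submodule.comap_equiv_eq_map_symm, LinearEquiv.finrank_map_eq,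
      (subProdEquiv _ _).finrank_eq, Module.finrank_prod]
  rw [hmain]
  have hcount := finrank_flow_add_card H
  rw [← Nat.card_eq_fintype_card, ← Nat.card_eq_fintype_card] at hcount
  push_cast
  omega

lemma iter_connected {V : Type} (G : SimpleGraph V) (hG : G.Connected) :
    ∀ n, (iterSubdiv G n).2.Connected
  | 0 => hG
  | n + 1 => subdiv_connected (iter_connected G hG n)

lemma iter_count {V : Type} [Finite V] (G : SimpleGraph V) :
    ∀ n, (Nat.card (iterSubdiv G n).2.edgeSet : ℤ) - (Nat.card (iterSubdiv G n).1 : ℤ)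
      = (Nat.card G.edgeSet : ℤ) - (Nat.card V : ℤ)
  | 0 => rfl
  | n + 1 => by
    haveI := iterSubdivFinite G n
    have h1 : Nat.card (iterSubdiv G (n + 1)).2.edgeSet
        = 2 * Nat.card (iterSubdiv G n).2.edgeSet := card_subdiv_edgeSet _
    have h2 : Nat.card (iterSubdiv G (n + 1)).1
        = Nat.card (iterSubdiv G n).1 + Nat.card (iterSubdiv G n).2.edgeSet := Nat.card_sum
    have ih := iter_count G n
    push_cast [h1, h2]
    push_cast at ih
    omega


end Aux

/-- multiplicity of the eigenvalue `0` of `Pₙ = P(sⁿ(G))`: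
`r + 1` for `n ≥ 2`; for `n = 1` it is `r − 1` if `G` has an odd cycle and
`r + 1` if `G` is bipartite, where `r = E₀ − N₀ + 1` is the circuit rank. -/
theorem iterSubdiv_eigMult_zero {V : Type} [Finite V] (G : SimpleGraph V)
    (hG : G.Connected) (r : ℤ)
    (hr : r = (Nat.card G.edgeSet : ℤ) - (Nat.card V : ℤ) + 1) :
    (∀ n, 2 ≤ n → (eigMult (normAdj (iterSubdiv G n).2) 0 : ℤ) = r + 1) ∧
    ((∃ (v : V) (w : G.Walk v v), w.IsCycle ∧ Odd w.length) →
      (eigMult (normAdj (iterSubdiv G 1).2) 0 : ℤ) = r - 1) ∧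
    (G.Colorable 2 → (eigMult (normAdj (iterSubdiv G 1).2) 0 : ℤ) = r + 1) := by
  refine ⟨?_, ?_, ?_⟩
  · intro n hn
    obtain ⟨m, rfl⟩ : ∃ m, n = m + 1 := ⟨n - 1, by omega⟩
    haveI := iterSubdivFinite G m
    have hconn : (iterSubdiv G m).2.Connected := iter_connected G hG m
    have hcol : (iterSubdiv G m).2.Colorable 2 := by
      obtain ⟨k, rfl⟩ : ∃ k, m = k + 1 := ⟨m - 1, by omega⟩
      haveI := iterSubdivFinite G k
      exact subdiv_colorable _
    have h := master (iterSubdiv G m).2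
    rw [sgnSpace_dim_one hconn hcol] at h
    have hcnt := iter_count G m
    show (eigMult (normAdj (subdivision (iterSubdiv G m).2)) 0 : ℤ) = r + 1
    rw [hr]
    push_cast at h
    omega
  · intro hodd
    have h := master G
    rw [sgnSpace_eq_bot hG hodd, finrank_bot] at h
    show (eigMult (normAdj (subdivision G)) 0 : ℤ) = r - 1
    rw [hr]
    push_cast at h
    omega
  · intro hcol2
    have h := master G
    rw [sgnSpace_dim_one hG hcol2] at h
    show (eigMult (normAdj (subdivision G)) 0 : ℤ) = r + 1
    rw [hr]
    push_cast at h
    omega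
end

section
/- Let G be a simple connected graph with normalized adjacency matrix P₀ and let P₁ be the normalized adjacency matrix of the subdivision s(G). Suppose μ ≠ 0 is an eigenvalue of P₁ with eigenvector ψ. Then the restriction of ψ to the original vertices of G is an eigenvector of P₀ with eigenvalue 2μ² − 1; moreover, the value of ψ at the new vertex subdividing edge ij equals (ψ_i/√(2d_i) + ψ_j/√(2d_j))/μ, so ψ is determined by its restriction to the original vertices. -/
section Aux
variable {V : Type} (G : SimpleGraph V)

@[simp] lemma subdivision_adj_inl_inr (v : V) (e : G.edgeSet) :
    (subdivision G).Adj (Sum.inl v) (Sum.inr e) ↔ v ∈ (e : Sym2 V) := Iff.rfl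

@[simp] lemma subdivision_adj_inr_inl (v : V) (e : G.edgeSet) :
    (subdivision G).Adj (Sum.inr e) (Sum.inl v) ↔ v ∈ (e : Sym2 V) := Iff.rfl

@[simp] lemma subdivision_adj_inl_inl (v w : V) :
    ¬ (subdivision G).Adj (Sum.inl v) (Sum.inl w) := fun h => h

@[simp] lemma subdivision_adj_inr_inr (e f : G.edgeSet) :
    ¬ (subdivision G).Adj (Sum.inr e) (Sum.inr f) := fun h => h

lemma card_nb_inl (v : V) :
    Nat.card ((subdivision G).neighborSet (Sum.inl v)) = Nat.card (G.neighborSet v) := by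
  classical
  have e1 : ((subdivision G).neighborSet (Sum.inl v)) ≃ {e : G.edgeSet // v ∈ (e : Sym2 V)} :=
    { toFun := fun x => match x with
        | ⟨Sum.inl w, hw⟩ => absurd hw (subdivision_adj_inl_inl G v w)
        | ⟨Sum.inr e, he⟩ => ⟨e, he⟩
      invFun := fun e => ⟨Sum.inr e.1, e.2⟩
      left_inv := by rintro ⟨(w | e), h⟩ <;> [exact absurd h (subdivision_adj_inl_inl G v w); rfl]
      right_inv := fun e => rfl }
  have e2 : {e : G.edgeSet // v ∈ (e : Sym2 V)} ≃ G.incidenceSet v :=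
    (Equiv.subtypeSubtypeEquivSubtypeInter (· ∈ G.edgeSet) (v ∈ ·)).trans (Equiv.setCongr rfl)
  rw [Nat.card_congr (e1.trans (e2.trans (G.incidenceSetEquivNeighborSet v)))]

lemma card_nb_inr (e : G.edgeSet) :
    Nat.card ((subdivision G).neighborSet (Sum.inr e)) = 2 := by
  classical
  have e1 : ((subdivision G).neighborSet (Sum.inr e)) ≃ {w : V // w ∈ (e : Sym2 V)} :=
    { toFun := fun x => match x with
        | ⟨Sum.inl w, hw⟩ => ⟨w, hw⟩
        | ⟨Sum.inr f, hf⟩ => absurd hf (subdivision_adj_inr_inr G e f)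
      invFun := fun w => ⟨Sum.inl w.1, w.2⟩
      left_inv := by rintro ⟨(w | f), h⟩ <;> [rfl; exact absurd h (subdivision_adj_inr_inr G e f)]
      right_inv := fun w => rfl }
  rw [Nat.card_congr e1]
  obtain ⟨e, he⟩ := e
  induction e using Sym2.ind with
  | _ i j =>
    have hij : i ≠ j := (G.mem_edgeSet.mp he).ne
    have e2 : {w : V // w ∈ (s(i,j) : Sym2 V)} ≃ ({i, j} : Set V) :=
      Equiv.subtypeEquivRight (fun w => by simp [Sym2.mem_iff])
    rw [Nat.card_congr e2, Nat.card_coe_set_eq, Set.ncard_pair hij]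

end Aux

lemma sum_ite_sym2 {V : Type} [Fintype V] [DecidableEq V] {i j : V} (hij : i ≠ j) (f : V → ℝ) :
    (∑ w : V, if w ∈ (s(i,j) : Sym2 V) then f w else 0) = f i + f j := by
  have h1 : ∀ w : V, (if w ∈ (s(i,j) : Sym2 V) then f w else 0) =
      (if w = i then f w else 0) + (if w = j then f w else 0) := by
    intro w
    rcases eq_or_ne w i with rfl | h1
    · simp [Sym2.mem_iff, hij]
    · rcases eq_or_ne w j with rfl | h2
      · simp [Sym2.mem_iff, h1]
      · simp [Sym2.mem_iff, h1, h2]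
  rw [Finset.sum_congr rfl (fun w _ => h1 w), Finset.sum_add_distrib,
    Finset.sum_ite_eq' Finset.univ i f, Finset.sum_ite_eq' Finset.univ j f]
  simp

lemma alg1 (x y a b : ℝ) (ha : 0 < a) (hb : 0 < b) :
    (1/Real.sqrt (2*a)) * (x/Real.sqrt (2*a) + y/Real.sqrt (2*b))
      = x/(2*a) + (1/2) * ((1/Real.sqrt (a*b)) * y) := by
  have h2 : (0:ℝ) ≤ 2 := by norm_num
  rw [Real.sqrt_mul h2 a, Real.sqrt_mul h2 b, Real.sqrt_mul ha.le b]
  have s2 : Real.sqrt 2 * Real.sqrt 2 = 2 := Real.mul_self_sqrt h2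
  have sa : Real.sqrt a * Real.sqrt a = a := Real.mul_self_sqrt ha.le
  have sb : Real.sqrt b * Real.sqrt b = b := Real.mul_self_sqrt hb.le
  calc (1/(Real.sqrt 2 * Real.sqrt a)) * (x/(Real.sqrt 2 * Real.sqrt a) + y/(Real.sqrt 2 * Real.sqrt b))
      = x/((Real.sqrt 2 * Real.sqrt a)*(Real.sqrt 2 * Real.sqrt a))
        + y/((Real.sqrt 2 * Real.sqrt a)*(Real.sqrt 2 * Real.sqrt b)) := by ring
    _ = x/(2*a) + (1/2) * ((1/(Real.sqrt a * Real.sqrt b)) * y) := by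
        rw [mul_mul_mul_comm, s2, sa, mul_mul_mul_comm (Real.sqrt 2), s2]
        ring


/-- if `ψ` is an eigenvector of `P₁ = P(s(G))` for an eigenvalue `μ ≠ 0`,
then its restriction to original vertices is an eigenvector of `P₀ = P(G)` for
`2μ² − 1`, and the value at the new vertex on edge `ij` is
`(ψᵢ/√(2dᵢ) + ψⱼ/√(2dⱼ))/μ`, so `ψ` is determined by its restriction. -/
theorem subdivision_eigenvector_restriction {V : Type} [Fintype V]
    (G : SimpleGraph V) [Fintype G.edgeSet] (hG : G.Connected) (μ : ℝ) (hμ : μ ≠ 0)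
    (ψ : V ⊕ G.edgeSet → ℝ) (hψ : ψ ≠ 0)
    (heig : Matrix.mulVec (normAdj (subdivision G)) ψ = μ • ψ) :
    Matrix.mulVec (normAdj G) (ψ ∘ Sum.inl) = (2 * μ ^ 2 - 1) • (ψ ∘ Sum.inl) ∧
    ψ ∘ Sum.inl ≠ 0 ∧
    ∀ (i j : V) (hij : G.Adj i j),
      ψ (Sum.inr ⟨s(i, j), G.mem_edgeSet.mpr hij⟩) =
        (ψ (Sum.inl i) / Real.sqrt (2 * (Nat.card (G.neighborSet i) : ℝ)) +
            ψ (Sum.inl j) / Real.sqrt (2 * (Nat.card (G.neighborSet j) : ℝ))) / μ := by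
  classical
  -- degenerate case: no edges
  by_cases hE : IsEmpty G.edgeSet
  · exfalso
    apply hψ
    have h0 : ∀ x, μ * ψ x = 0 := by
      intro x
      have hx := congrFun heig x
      rw [Pi.smul_apply, smul_eq_mul] at hx
      rw [← hx]
      cases x with
      | inl v =>
        simp [Matrix.mulVec, dotProduct, Fintype.sum_sum_type, normAdj,
          Finset.univ_eq_empty]
      | inr e => exact hE.elim e
    funext x
    have hx := h0 x
    rcases mul_eq_zero.mp hx with h | h
    · exact absurd h hμ
    · simpa using h
  haveI : Nonempty G.edgeSet := not_isEmpty_iff.mp hE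
  -- positive degrees
  have hdpos : ∀ v : V, 0 < (Nat.card (G.neighborSet v) : ℝ) := by
    intro v
    have hne : Nonempty (G.neighborSet v) := by
      obtain ⟨⟨e, he⟩⟩ := ‹Nonempty G.edgeSet›
      induction e using Sym2.ind with
      | _ a b =>
        have hab : G.Adj a b := he
        by_cases hva : v = a
        · exact ⟨b, hva ▸ hab⟩
        · obtain ⟨p⟩ := hG.preconnected v a
          have hnil : ¬ p.Nil := SimpleGraph.Walk.not_nil_of_ne hva
          exact ⟨p.getVert 1, SimpleGraph.Walk.adj_snd hnil⟩
    exact_mod_cast Nat.card_pos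
  -- edge equation
  have key : ∀ (i j : V) (hij : G.Adj i j) (he : s(i,j) ∈ G.edgeSet),
      μ * ψ (Sum.inr ⟨s(i,j), he⟩) =
        ψ (Sum.inl i) / Real.sqrt (2 * (Nat.card (G.neighborSet i) : ℝ)) +
        ψ (Sum.inl j) / Real.sqrt (2 * (Nat.card (G.neighborSet j) : ℝ)) := by
    intro i j hij he
    have hx := congrFun heig (Sum.inr ⟨s(i,j), he⟩)
    rw [Pi.smul_apply, smul_eq_mul] at hx
    rw [← hx]
    simp only [Matrix.mulVec, dotProduct, Fintype.sum_sum_type, normAdj,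
      Matrix.of_apply, subdivision_adj_inr_inl, subdivision_adj_inr_inr, if_false,
      zero_mul, Finset.sum_const_zero, add_zero, card_nb_inr, card_nb_inl,
      Nat.cast_ofNat]
    rw [Finset.sum_congr rfl (fun w _ => by rw [ite_mul, zero_mul]),
      sum_ite_sym2 hij.ne (fun w => 1 / Real.sqrt (2 * (Nat.card (G.neighborSet w) : ℝ)) * ψ (Sum.inl w))]
    ring
  -- the vertex equation, rewritten over neighbors
  have hvv : ∀ v : V, μ * (μ * ψ (Sum.inl v)) =
      ∑ w : V, (if G.Adj v w then
        (1 / Real.sqrt (2 * (Nat.card (G.neighborSet v) : ℝ))) *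
          (ψ (Sum.inl v) / Real.sqrt (2 * (Nat.card (G.neighborSet v) : ℝ)) +
           ψ (Sum.inl w) / Real.sqrt (2 * (Nat.card (G.neighborSet w) : ℝ))) else 0) := by
    intro v
    set c : V → V → ℝ := fun v w =>
      (1 / Real.sqrt (2 * (Nat.card (G.neighborSet v) : ℝ))) *
        (ψ (Sum.inl v) / Real.sqrt (2 * (Nat.card (G.neighborSet v) : ℝ)) +
         ψ (Sum.inl w) / Real.sqrt (2 * (Nat.card (G.neighborSet w) : ℝ))) with hc
    have hx := congrFun heig (Sum.inl v)
    rw [Pi.smul_apply, smul_eq_mul] at hx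
    have h1 : μ * ψ (Sum.inl v) = ∑ e : G.edgeSet,
        (if v ∈ (e : Sym2 V) then
          (1 / Real.sqrt (2 * (Nat.card (G.neighborSet v) : ℝ))) * ψ (Sum.inr e) else 0) := by
      rw [← hx]
      simp only [Matrix.mulVec, dotProduct, Fintype.sum_sum_type, normAdj,
        Matrix.of_apply, subdivision_adj_inl_inr, subdivision_adj_inl_inl, if_false,
        zero_mul, Finset.sum_const_zero, zero_add, card_nb_inr, card_nb_inl,
        Nat.cast_ofNat]
      refine Finset.sum_congr rfl fun e _ => ?_
      rw [ite_mul, zero_mul, mul_comm ((Nat.card (G.neighborSet v) : ℝ)) 2]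
    have perE : ∀ e : G.edgeSet,
        μ * (if v ∈ (e : Sym2 V) then
          (1 / Real.sqrt (2 * (Nat.card (G.neighborSet v) : ℝ))) * ψ (Sum.inr e) else 0)
        = ∑ w : V, (if G.Adj v w ∧ (e : Sym2 V) = s(v, w) then c v w else 0) := by
      rintro ⟨e, he⟩
      induction e using Sym2.ind with
      | _ a b =>
        have hab : G.Adj a b := he
        by_cases hmem : v ∈ (s(a,b) : Sym2 V)
        · rcases Sym2.mem_iff.mp hmem with rfl | rfl
          · -- v = a
            have hcond : ∀ w, (G.Adj v w ∧ (s(v,b) : Sym2 V) = s(v, w)) ↔ w = b := by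
              intro w
              constructor
              · rintro ⟨hadj, hs⟩
                rcases Sym2.eq_iff.mp hs with ⟨-, rfl⟩ | ⟨h1, h2⟩
                · rfl
                · exact absurd h2 hab.ne'
              · rintro rfl; exact ⟨hab, rfl⟩
            simp only [hcond]
            rw [Finset.sum_ite_eq' Finset.univ b (fun w => c v w), if_pos (Finset.mem_univ b),
              if_pos hmem]
            simp only [hc]
            rw [← key v b hab he]
            ring
          · -- v = b
            have hcond : ∀ w, (G.Adj v w ∧ (s(a,v) : Sym2 V) = s(v, w)) ↔ w = a := by
              intro w
              constructor
              · rintro ⟨hadj, hs⟩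
                rcases Sym2.eq_iff.mp hs with ⟨h1, -⟩ | ⟨h1, -⟩
                · exact absurd h1 hab.ne
                · exact h1.symm
              · rintro rfl; exact ⟨hab.symm, Sym2.eq_swap⟩
            simp only [hcond]
            rw [Finset.sum_ite_eq' Finset.univ a (fun w => c v w), if_pos (Finset.mem_univ a),
              if_pos hmem]
            simp only [hc]
            rw [add_comm (ψ (Sum.inl v) / Real.sqrt (2 * (Nat.card (G.neighborSet v) : ℝ))),
              ← key a v hab he]
            ring
        · rw [if_neg hmem, mul_zero]
          refine (Finset.sum_eq_zero fun w _ => if_neg ?_).symm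
          rintro ⟨-, hs⟩
          apply hmem
          have hs' : (s(a,b) : Sym2 V) = s(v,w) := hs
          rw [hs']
          exact Sym2.mem_mk_left v w
    calc μ * (μ * ψ (Sum.inl v))
        = ∑ e : G.edgeSet, μ * (if v ∈ (e : Sym2 V) then
            (1 / Real.sqrt (2 * (Nat.card (G.neighborSet v) : ℝ))) * ψ (Sum.inr e) else 0) := by
          rw [h1, Finset.mul_sum]
      _ = ∑ e : G.edgeSet, ∑ w : V, (if G.Adj v w ∧ (e : Sym2 V) = s(v, w) then c v w else 0) :=
          Finset.sum_congr rfl fun e _ => perE e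
      _ = ∑ w : V, ∑ e : G.edgeSet, (if G.Adj v w ∧ (e : Sym2 V) = s(v, w) then c v w else 0) :=
          Finset.sum_comm
      _ = ∑ w : V, (if G.Adj v w then c v w else 0) := by
          refine Finset.sum_congr rfl fun w _ => ?_
          by_cases hvw : G.Adj v w
          · have hcond : ∀ e : G.edgeSet, (G.Adj v w ∧ (e : Sym2 V) = s(v, w)) ↔
                e = ⟨s(v,w), G.mem_edgeSet.mpr hvw⟩ := by
              intro e
              constructor
              · rintro ⟨-, hs⟩; exact Subtype.ext hs
              · rintro rfl; exact ⟨hvw, rfl⟩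
            simp only [hcond]
            rw [Finset.sum_ite_eq' Finset.univ _ (fun _ => c v w)]
            simp [hvw]
          · simp [hvw]
  refine ⟨?_, ?_, ?_⟩
  · -- eigenvector equation for the restriction
    funext v
    have hv := hvv v
    have hdeg : ((Nat.card (G.neighborSet v)) : ℝ) = (G.degree v : ℝ) := by
      congr 1
      rw [Nat.card_eq_fintype_card]
      exact SimpleGraph.card_neighborSet_eq_degree G v
    have e3 : ∀ w : V, (if G.Adj v w then
        (1 / Real.sqrt (2 * (Nat.card (G.neighborSet v) : ℝ))) *
          (ψ (Sum.inl v) / Real.sqrt (2 * (Nat.card (G.neighborSet v) : ℝ)) +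
           ψ (Sum.inl w) / Real.sqrt (2 * (Nat.card (G.neighborSet w) : ℝ))) else 0)
        = (if G.Adj v w then ψ (Sum.inl v) / (2 * (Nat.card (G.neighborSet v) : ℝ)) else 0)
          + (1/2) * ((if G.Adj v w then
              1 / Real.sqrt ((Nat.card (G.neighborSet v) : ℝ) * (Nat.card (G.neighborSet w) : ℝ))
              else 0) * ψ (Sum.inl w)) := by
      intro w
      by_cases hvw : G.Adj v w
      · rw [if_pos hvw, if_pos hvw, if_pos hvw,
          alg1 (ψ (Sum.inl v)) (ψ (Sum.inl w)) _ _ (hdpos v) (hdpos w)]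
      · simp [hvw]
    rw [Finset.sum_congr rfl (fun w _ => e3 w), Finset.sum_add_distrib, ← Finset.mul_sum] at hv
    have hfirst : (∑ w : V, if G.Adj v w then
        ψ (Sum.inl v) / (2 * (Nat.card (G.neighborSet v) : ℝ)) else 0)
        = ψ (Sum.inl v) / 2 := by
      rw [← Finset.sum_filter, Finset.sum_const, nsmul_eq_mul]
      have hfc : (Finset.filter (fun x => G.Adj v x) Finset.univ).card
          = Nat.card (G.neighborSet v) := by
        rw [Nat.card_coe_set_eq, Set.ncard_eq_toFinset_card']
        congr 1
        ext w
        simp [SimpleGraph.mem_neighborSet]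
      have h0 : ((Nat.card (G.neighborSet v)) : ℝ) ≠ 0 := (hdpos v).ne'
      rw [hfc, mul_comm (2:ℝ) ((Nat.card (G.neighborSet v) : ℝ)), mul_div_assoc',
        mul_div_mul_left _ _ h0]
    rw [hfirst] at hv
    -- now conclude
    show Matrix.mulVec (normAdj G) (ψ ∘ Sum.inl) v = (2 * μ ^ 2 - 1) * (ψ ∘ Sum.inl) v
    have hLHS : Matrix.mulVec (normAdj G) (ψ ∘ Sum.inl) v
        = ∑ w : V, (if G.Adj v w then
            1 / Real.sqrt ((Nat.card (G.neighborSet v) : ℝ) * (Nat.card (G.neighborSet w) : ℝ))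
            else 0) * ψ (Sum.inl w) := by
      simp only [Matrix.mulVec, dotProduct, normAdj, Matrix.of_apply,
        Function.comp_apply]
    rw [hLHS, Function.comp_apply]
    nlinarith [hv]
  · -- nonvanishing of the restriction
    intro h0
    apply hψ
    funext x
    cases x with
    | inl v => exact congrFun h0 v
    | inr e =>
      obtain ⟨e, he⟩ := e
      induction e using Sym2.ind with
      | _ a b =>
        have hab : G.Adj a b := he
        have hk := key a b hab he
        have ha0 : ψ (Sum.inl a) = 0 := congrFun h0 a
        have hb0 : ψ (Sum.inl b) = 0 := congrFun h0 b
        rw [ha0, hb0] at hk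
        simp only [zero_div, add_zero] at hk
        have := mul_eq_zero.mp hk
        rcases this with h | h
        · exact absurd h hμ
        · simpa using h
  · intro i j hij
    rw [eq_div_iff hμ, mul_comm]
    exact key i j hij (G.mem_edgeSet.mpr hij)
end
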